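/- Vanishing of GL(n,ℂ) characters at order-two elements: Let n ≥ 1, let k be an integer with 0 < k ≤ n/2, and let l = (l_1 > l_2 > … > l_n ≥ 0) be a strictly decreasing tuple of nonnegative integers. If the number of indices i with l_i even is strictly greater than n−k, then lim_{ε→0⁺} χ_l(C_{n−k,k}(ε)) = 0. -/

import Mathlib

open Filter Topology

/-- The Weyl character of `GL(n,ℂ)`: for `l = λ + ρ_n` strictly decreasing and a regular tuple
`t`, `χ_l(t) = det((t_j^{l_i})) / ∏_{i<j}(t_i − t_j)`. -/
noncomputable def chiGL {n : ℕ} (l : Fin n → ℕ) (t : Fin n → ℂ) : ℂ :=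
  (Matrix.of fun i j : Fin n => t j ^ l i).det /
    ∏ i : Fin n, ∏ j ∈ Finset.Ioi i, (t i - t j)

/-- The regular tuple `C_{n−k,k}(ε) = (x_{n−k}(ε),…,x_1(ε),−x_k(ε),…,−x_1(ε))` with
`x_j(ε) = 1 + jε`, tending as `ε → 0⁺` to the order-two element with `n−k` entries `1`
and `k` entries `−1`. -/
noncomputable def CnkEps (n k : ℕ) (ε : ℝ) : Fin n → ℂ := fun i =>
  if (i : ℕ) < n - k then 1 + ((n - k - (i : ℕ) : ℕ) : ℂ) * (ε : ℂ)
  else -(1 + ((n - (i : ℕ) : ℕ) : ℂ) * (ε : ℂ))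

open Polynomial Finset

section Lagrange

lemma leadingCoeff_lagrange_basis {ι : Type*} [DecidableEq ι] (s : Finset ι) (v : ι → ℂ)
    (j : ι) :
    (Lagrange.basis s v j).leadingCoeff = ∏ a ∈ s.erase j, (v j - v a)⁻¹ := by
  rw [Lagrange.basis, leadingCoeff_prod]
  refine Finset.prod_congr rfl fun a _ => ?_
  rcases eq_or_ne (v j) (v a) with h | h
  · rw [Lagrange.basisDivisor, h, sub_self, inv_zero, map_zero, zero_mul, leadingCoeff_zero]
  · rw [Lagrange.basisDivisor, leadingCoeff_mul, leadingCoeff_C,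
      (monic_X_sub_C (v a)).leadingCoeff, mul_one]

lemma lagrange_sum {ι : Type*} [DecidableEq ι] (s : Finset ι) (v : ι → ℂ)
    (hvs : Set.InjOn v s) (m : ℕ) (hm : m < s.card) :
    ∑ j ∈ s, (v j) ^ m * (∏ a ∈ s.erase j, (v j - v a))⁻¹
      = if m = s.card - 1 then 1 else 0 := by
  have hdeg : ((X : ℂ[X]) ^ m).degree < s.card := by
    rw [degree_X_pow]; exact_mod_cast hm
  have h1 : (X : ℂ[X]) ^ m = Lagrange.interpolate s v (fun i => v i ^ m) := by
    apply Lagrange.eq_interpolate hvs hdeg |>.trans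
    apply Lagrange.interpolate_eq_of_values_eq_on
    intro i hi; simp
  have h2 := congrArg (fun p : ℂ[X] => p.coeff (s.card - 1)) h1
  simp only [Lagrange.interpolate_apply, finset_sum_coeff, coeff_C_mul, coeff_X_pow] at h2
  rw [if_congr eq_comm rfl rfl, h2]
  refine Finset.sum_congr rfl fun j hj => ?_
  congr 1
  have hnd := Lagrange.natDegree_basis hvs hj
  rw [← hnd, coeff_natDegree, leadingCoeff_lagrange_basis, ← Finset.prod_inv_distrib]

end Lagrange

namespace GLV

variable (n k : ℕ)

/-- block start -/
def bs (i : Fin n) : ℕ := if (i : ℕ) < n - k then 0 else n - k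

/-- local index within the block -/
def dd (i : Fin n) : ℕ := (i : ℕ) - bs n k i

/-- coefficient of ε -/
def cc (i : Fin n) : ℕ := if (i : ℕ) < n - k then n - k - (i : ℕ) else n - (i : ℕ)

/-- sign of the block -/
noncomputable def sg (i : Fin n) : ℂ := if (i : ℕ) < n - k then 1 else -1

lemma bs_le_self (i : Fin n) : bs n k i ≤ (i : ℕ) := by
  unfold bs; split_ifs with h
  · omega
  · omega

/-- node set for column `s` -/
def Tset (s : Fin n) : Finset (Fin n) :=
  (Finset.Icc (bs n k s) (s : ℕ)).attachFin
    (fun m hm => lt_of_le_of_lt (Finset.mem_Icc.mp hm).2 s.isLt)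

lemma mem_Tset {s j : Fin n} : j ∈ Tset n k s ↔ bs n k s ≤ (j : ℕ) ∧ (j : ℕ) ≤ (s : ℕ) := by
  simp [Tset, Finset.mem_attachFin, Finset.mem_Icc]

lemma card_Tset (s : Fin n) : (Tset n k s).card = dd n k s + 1 := by
  have := bs_le_self n k s
  rw [Tset, Finset.card_attachFin, Nat.card_Icc, dd]
  omega

variable {n k}
variable (hk : 0 < k) (hk2 : 2 * k ≤ n)
include hk hk2

lemma nk_pos : 0 < n - k := by omega

lemma bs_eq_of_mem {s j : Fin n} (hj : j ∈ Tset n k s) : bs n k j = bs n k s := by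
  rw [mem_Tset] at hj
  have := s.isLt
  unfold bs at *
  split_ifs at * <;> omega

lemma sg_eq_of_mem {s j : Fin n} (hj : j ∈ Tset n k s) : sg n k j = sg n k s := by
  have hb := bs_eq_of_mem hk hk2 hj
  unfold bs at hb
  unfold sg
  split_ifs at * <;> first | rfl | omega

lemma cc_inj {i j : Fin n} (hb : bs n k i = bs n k j) (hc : cc n k i = cc n k j) : i = j := by
  have hi := i.isLt; have hj := j.isLt
  apply Fin.ext
  unfold bs cc at *
  split_ifs at * <;> omega

lemma ccC_injOn_Tset (s : Fin n) :
    Set.InjOn (fun j => (cc n k j : ℂ)) (Tset n k s) := by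
  intro a ha b hb hab
  simp only [Nat.cast_inj] at hab
  exact cc_inj hk hk2 ((bs_eq_of_mem hk hk2 ha).trans (bs_eq_of_mem hk hk2 hb).symm) hab

end GLV

namespace GLV

variable {n k : ℕ}

noncomputable def wt (n k : ℕ) (j s : Fin n) : ℂ :=
  (∏ a ∈ (Tset n k s).erase j, ((cc n k j : ℂ) - (cc n k a : ℂ)))⁻¹

noncomputable def Hs (n k : ℕ) (m : ℕ) (s : Fin n) : ℂ :=
  ∑ j ∈ Tset n k s, (cc n k j : ℂ) ^ m * wt n k j s

variable (hk : 0 < k) (hk2 : 2 * k ≤ n)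
include hk hk2

lemma Hs_eq (m : ℕ) (s : Fin n) (hm : m ≤ dd n k s) :
    Hs n k m s = if m = dd n k s then 1 else 0 := by
  have h := lagrange_sum (Tset n k s) (fun j => (cc n k j : ℂ))
    (ccC_injOn_Tset hk hk2 s) m (by rw [card_Tset]; omega)
  rw [card_Tset] at h
  simpa [Hs, wt, Nat.add_sub_cancel] using h

lemma Hs_lt (m : ℕ) (s : Fin n) (hm : m < dd n k s) : Hs n k m s = 0 := by
  rw [Hs_eq hk hk2 m s (le_of_lt hm), if_neg (by omega)]

lemma Hs_self (s : Fin n) : Hs n k (dd n k s) s = 1 := by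
  rw [Hs_eq hk hk2 _ s le_rfl, if_pos rfl]

lemma key_col (l : ℕ) (z : ℂ) (s : Fin n) :
    ∑ j ∈ Tset n k s, (1 + (cc n k j : ℂ) * z) ^ l * wt n k j s
      = z ^ dd n k s *
        ∑ m ∈ Finset.Icc (dd n k s) l, (l.choose m : ℂ) * Hs n k m s * z ^ (m - dd n k s) := by
  have hexp : ∀ j : Fin n, (1 + (cc n k j : ℂ) * z) ^ l
      = ∑ m ∈ Finset.range (l + 1), (l.choose m : ℂ) * ((cc n k j : ℂ) ^ m * z ^ m) := by
    intro j
    rw [add_comm (1 : ℂ), add_pow]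
    refine Finset.sum_congr rfl fun m _ => ?_
    rw [one_pow, mul_pow]
    ring
  calc ∑ j ∈ Tset n k s, (1 + (cc n k j : ℂ) * z) ^ l * wt n k j s
      = ∑ j ∈ Tset n k s, ∑ m ∈ Finset.range (l + 1),
          (l.choose m : ℂ) * z ^ m * ((cc n k j : ℂ) ^ m * wt n k j s) := by
        refine Finset.sum_congr rfl fun j _ => ?_
        rw [hexp j, Finset.sum_mul]
        refine Finset.sum_congr rfl fun m _ => by ring
    _ = ∑ m ∈ Finset.range (l + 1), (l.choose m : ℂ) * z ^ m * Hs n k m s := by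
        rw [Finset.sum_comm]
        refine Finset.sum_congr rfl fun m _ => ?_
        rw [Hs, Finset.mul_sum]
    _ = ∑ m ∈ Finset.Icc (dd n k s) l, (l.choose m : ℂ) * z ^ m * Hs n k m s := by
        refine (Finset.sum_subset ?_ ?_).symm
        · intro m hm
          rw [Finset.mem_Icc] at hm
          rw [Finset.mem_range]
          omega
        · intro m hm1 hm2
          rw [Finset.mem_range] at hm1
          rw [Finset.mem_Icc] at hm2
          rw [Hs_lt hk hk2 m s (by omega), mul_zero]
    _ = z ^ dd n k s *
        ∑ m ∈ Finset.Icc (dd n k s) l, (l.choose m : ℂ) * Hs n k m s * z ^ (m - dd n k s) := by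
        rw [Finset.mul_sum]
        refine Finset.sum_congr rfl fun m hm => ?_
        rw [Finset.mem_Icc] at hm
        have : z ^ m = z ^ dd n k s * z ^ (m - dd n k s) := by
          rw [← pow_add]; congr 1; omega
        rw [this]; ring

end GLV

namespace GLV

variable {n k : ℕ}

noncomputable def Gm (n k : ℕ) : Matrix (Fin n) (Fin n) ℂ :=
  Matrix.of fun j s => if j ∈ Tset n k s then wt n k j s else 0

noncomputable def Bm (n k : ℕ) (l : Fin n → ℕ) (z : ℂ) : Matrix (Fin n) (Fin n) ℂ :=
  Matrix.of fun i s => sg n k s ^ l i *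
    ∑ m ∈ Finset.Icc (dd n k s) (l i), ((l i).choose m : ℂ) * Hs n k m s * z ^ (m - dd n k s)

variable (hk : 0 < k) (hk2 : 2 * k ≤ n)
include hk hk2

lemma AG_eq (l : Fin n → ℕ) (z : ℂ) :
    (Matrix.of fun i j : Fin n => (sg n k j * (1 + (cc n k j : ℂ) * z)) ^ l i) * Gm n k
      = Bm n k l z * Matrix.diagonal (fun s => z ^ dd n k s) := by
  ext i s
  rw [Matrix.mul_diagonal, Matrix.mul_apply]
  simp only [Matrix.of_apply, Gm, mul_ite, mul_zero]
  rw [Finset.sum_ite_mem, Finset.univ_inter]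
  have : ∀ j ∈ Tset n k s,
      (sg n k j * (1 + (cc n k j : ℂ) * z)) ^ l i * wt n k j s
        = sg n k s ^ l i * ((1 + (cc n k j : ℂ) * z) ^ l i * wt n k j s) := by
    intro j hj
    rw [mul_pow, sg_eq_of_mem hk hk2 hj, mul_assoc]
  rw [Finset.sum_congr rfl this, ← Finset.mul_sum, key_col hk hk2 (l i) z s, Bm]
  simp only [Matrix.of_apply]
  ring

lemma sg_ne_zero (i : Fin n) : sg n k i ≠ 0 := by
  unfold sg; split_ifs <;> simp

lemma wt_diag_ne_zero (s : Fin n) : wt n k s s ≠ 0 := by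
  rw [wt]
  apply inv_ne_zero
  rw [Finset.prod_ne_zero_iff]
  intro a ha
  rw [Finset.mem_erase] at ha
  rw [sub_ne_zero]
  intro hEq
  refine ha.1 (cc_inj hk hk2 (bs_eq_of_mem hk hk2 ha.2) ?_)
  exact_mod_cast hEq.symm

lemma Gm_upper : (Gm n k).BlockTriangular id := by
  intro j s h
  simp only [id] at h
  simp only [Gm, Matrix.of_apply, ite_eq_right_iff]
  intro hj
  rw [mem_Tset] at hj
  exact absurd (Fin.lt_def.mp h) (by omega)

lemma det_Gm_ne_zero : (Gm n k).det ≠ 0 := by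
  rw [Matrix.det_of_upperTriangular (Gm_upper hk hk2)]
  rw [Finset.prod_ne_zero_iff]
  intro s _
  have hs : s ∈ Tset n k s := by rw [mem_Tset]; exact ⟨bs_le_self n k s, le_rfl⟩
  simp only [Gm, Matrix.of_apply, if_pos hs]
  exact wt_diag_ne_zero hk hk2 s

lemma det_AG (l : Fin n → ℕ) (z : ℂ) :
    (Matrix.of fun i j : Fin n => (sg n k j * (1 + (cc n k j : ℂ) * z)) ^ l i).det * (Gm n k).det
      = (Bm n k l z).det * z ^ (∑ s : Fin n, dd n k s) := by
  rw [← Matrix.det_mul, AG_eq hk hk2 l z, Matrix.det_mul, Matrix.det_diagonal,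
    Finset.prod_pow_eq_pow_sum]

end GLV

namespace GLV

variable {n k : ℕ}

noncomputable def uu (n k : ℕ) (i j : Fin n) (z : ℂ) : ℂ :=
  if bs n k i = bs n k j then sg n k i * ((cc n k i : ℂ) - (cc n k j : ℂ))
  else 2 + ((cc n k i : ℂ) + (cc n k j : ℂ)) * z

variable (hk : 0 < k) (hk2 : 2 * k ≤ n)
include hk hk2

lemma tdiff (z : ℂ) {i j : Fin n} (hij : i < j) :
    sg n k i * (1 + (cc n k i : ℂ) * z) - sg n k j * (1 + (cc n k j : ℂ) * z)
      = (if bs n k i = bs n k j then z else 1) * uu n k i j z := by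
  have hij' : (i : ℕ) < (j : ℕ) := Fin.lt_def.mp hij
  have hnk : 0 < n - k := by omega
  unfold uu sg bs
  split_ifs <;> first | ring1 | (exfalso; omega)

lemma col_prod (z : ℂ) (j : Fin n) :
    ∏ i ∈ Finset.Iio j,
        (sg n k i * (1 + (cc n k i : ℂ) * z) - sg n k j * (1 + (cc n k j : ℂ) * z))
      = z ^ dd n k j * ∏ i ∈ Finset.Iio j, uu n k i j z := by
  have hcard : ((Finset.Iio j).filter (fun i => bs n k i = bs n k j)).card = dd n k j := by
    have hEq : (Finset.Iio j).filter (fun i => bs n k i = bs n k j)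
        = (Finset.Ico (bs n k j) (j : ℕ)).attachFin
            (fun m hm => lt_trans (Finset.mem_Ico.mp hm).2 j.isLt) := by
      ext i
      have hi := i.isLt; have hj := j.isLt
      have hnk : 0 < n - k := by omega
      simp only [Finset.mem_filter, Finset.mem_Iio, Finset.mem_attachFin, Finset.mem_Ico,
        Fin.lt_def, bs]
      split_ifs <;> rw [Finset.mem_filter, Finset.mem_Iio, Fin.lt_def] <;> split_ifs <;> omega
    rw [hEq, Finset.card_attachFin, Nat.card_Ico, dd]
  calc ∏ i ∈ Finset.Iio j,
        (sg n k i * (1 + (cc n k i : ℂ) * z) - sg n k j * (1 + (cc n k j : ℂ) * z))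
      = ∏ i ∈ Finset.Iio j,
          ((if bs n k i = bs n k j then z else 1) * uu n k i j z) := by
        refine Finset.prod_congr rfl fun i hi => ?_
        exact tdiff hk hk2 z (Finset.mem_Iio.mp hi)
    _ = (∏ i ∈ Finset.Iio j, (if bs n k i = bs n k j then z else 1))
          * ∏ i ∈ Finset.Iio j, uu n k i j z := Finset.prod_mul_distrib
    _ = z ^ dd n k j * ∏ i ∈ Finset.Iio j, uu n k i j z := by
        rw [Finset.prod_ite, Finset.prod_const, Finset.prod_const_one, mul_one, hcard]

lemma Q_eq (z : ℂ) :
    ∏ i : Fin n, ∏ j ∈ Finset.Ioi i,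
        (sg n k i * (1 + (cc n k i : ℂ) * z) - sg n k j * (1 + (cc n k j : ℂ) * z))
      = z ^ (∑ s : Fin n, dd n k s) *
          ∏ j : Fin n, ∏ i ∈ Finset.Iio j, uu n k i j z := by
  rw [Finset.prod_comm' (t' := Finset.univ) (s' := fun j => Finset.Iio j)
    (by intro x y; simp [Finset.mem_Ioi, Finset.mem_Iio])]
  rw [Finset.prod_congr rfl (fun j _ => col_prod hk hk2 z j), Finset.prod_mul_distrib,
    Finset.prod_pow_eq_pow_sum]

lemma dd_lt (s : Fin n) : dd n k s < n - k := by
  have := s.isLt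
  unfold dd bs
  split_ifs <;> omega

lemma CnkEps_eq (ε : ℝ) :
    CnkEps n k ε = fun i => sg n k i * (1 + (cc n k i : ℂ) * (ε : ℂ)) := by
  funext i
  unfold CnkEps sg cc
  split_ifs with h
  · rw [one_mul]
  · ring

end GLV

namespace GLV

variable {n k : ℕ}
variable (hk : 0 < k) (hk2 : 2 * k ≤ n)
include hk hk2

lemma Bm_zero (l : Fin n → ℕ) :
    Bm n k l 0 = Matrix.of fun i s => sg n k s ^ l i * ((l i).choose (dd n k s) : ℂ) := by
  ext i s
  simp only [Bm, Matrix.of_apply]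
  congr 1
  rcases le_or_gt (dd n k s) (l i) with h | h
  · rw [Finset.sum_eq_single_of_mem (dd n k s) (Finset.mem_Icc.mpr ⟨le_rfl, h⟩)]
    · rw [Hs_self hk hk2, Nat.sub_self, pow_zero]; ring
    · intro m hm hne
      rw [Finset.mem_Icc] at hm
      rw [zero_pow (by omega), mul_zero]
  · rw [Finset.Icc_eq_empty (by omega), Finset.sum_empty,
      Nat.choose_eq_zero_of_lt h, Nat.cast_zero]

lemma det_Bm_zero (l : Fin n → ℕ)
    (hcard : n - k < (Finset.univ.filter fun i => Even (l i)).card) :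
    (Bm n k l 0).det = 0 := by
  classical
  set E : Finset (Fin n) := Finset.univ.filter fun i => Even (l i) with hE
  have hr : ¬ LinearIndependent ℂ
      (fun (i : {x // x ∈ E}) => fun s : Fin (n - k) => (((l i).choose (s : ℕ) : ℂ))) := by
    intro hli
    have h1 := hli.fintype_card_le_finrank
    rw [Fintype.card_coe, Module.finrank_pi, Fintype.card_fin] at h1
    omega
  obtain ⟨g, hg0, i0, hgi0⟩ := Fintype.not_linearIndependent_iff.mp hr
  set v : Fin n → ℂ := fun i => if h : i ∈ E then g ⟨i, h⟩ else 0 with hv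
  apply Matrix.exists_vecMul_eq_zero_iff.mp
  refine ⟨v, ?_, ?_⟩
  · intro h0
    have h1 := congrFun h0 (i0 : Fin n)
    rw [hv] at h1
    simp only [dif_pos i0.2, Pi.zero_apply] at h1
    rw [Subtype.coe_eta] at h1
    exact hgi0 h1
  · funext s
    have hdds : dd n k s < n - k := dd_lt hk hk2 s
    have hg0s := congrFun hg0 ⟨dd n k s, hdds⟩
    simp only [Finset.sum_apply, Pi.smul_apply, smul_eq_mul, Pi.zero_apply] at hg0s
    simp only [Matrix.vecMul, dotProduct, Pi.zero_apply]
    have hsub : ∑ i : Fin n, v i * Bm n k l 0 i s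
        = ∑ i ∈ E, v i * Bm n k l 0 i s := by
      refine (Finset.sum_subset (Finset.subset_univ E) ?_).symm
      intro i _ hiE
      rw [hv]
      simp only [dif_neg hiE, zero_mul]
    have hterm : ∀ i : {x // x ∈ E},
        v (i : Fin n) * Bm n k l 0 (i : Fin n) s
          = g i * (((l (i : Fin n)).choose (dd n k s) : ℂ)) := by
      intro i
      have hiE : (i : Fin n) ∈ E := i.2
      have hEven : Even (l (i : Fin n)) := by
        simp only [hE, Finset.mem_filter] at hiE
        exact hiE.2
      have hsg : sg n k s ^ l (i : Fin n) = 1 := by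
        unfold sg
        split_ifs
        · rw [one_pow]
        · exact hEven.neg_one_pow
      rw [hv]
      simp only [dif_pos i.2, Subtype.coe_eta]
      rw [Bm_zero hk hk2, Matrix.of_apply, hsg, one_mul]
    calc ∑ i : Fin n, v i * Bm n k l 0 i s
        = ∑ i ∈ E, v i * Bm n k l 0 i s := hsub
      _ = ∑ i ∈ E.attach, v (i : Fin n) * Bm n k l 0 (i : Fin n) s :=
          (Finset.sum_attach E _).symm
      _ = ∑ i ∈ E.attach, g i * (((l (i : Fin n)).choose (dd n k s) : ℂ)) :=
          Finset.sum_congr rfl fun i _ => hterm i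
      _ = 0 := by rw [← Finset.univ_eq_attach]; exact hg0s

lemma uu_ne_zero (ε : ℝ) (hε : 0 ≤ ε) {i j : Fin n} (hij : i < j) :
    uu n k i j (ε : ℂ) ≠ 0 := by
  unfold uu
  split_ifs with hb
  · refine mul_ne_zero (sg_ne_zero hk hk2 i) ?_
    rw [sub_ne_zero]
    intro hcc
    exact absurd (cc_inj hk hk2 hb (by exact_mod_cast hcc)) (ne_of_lt hij)
  · have hcast : (2 + ((cc n k i : ℂ) + (cc n k j : ℂ)) * (ε : ℂ))
        = ((2 + ((cc n k i : ℝ) + (cc n k j : ℝ)) * ε : ℝ) : ℂ) := by push_cast; ring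
    rw [hcast, Complex.ofReal_ne_zero]
    have h1 : (0:ℝ) ≤ ((cc n k i : ℝ) + (cc n k j : ℝ)) * ε :=
      mul_nonneg (by positivity) hε
    intro h2
    linarith [h1, h2]

lemma det_AG' (l : Fin n → ℕ) (ε : ℝ) :
    (Matrix.of fun i j : Fin n => (CnkEps n k ε j) ^ l i).det * (Gm n k).det
      = (Bm n k l (ε : ℂ)).det * (ε : ℂ) ^ (∑ s : Fin n, dd n k s) := by
  simp only [CnkEps_eq hk hk2 ε]
  exact det_AG hk hk2 l (ε : ℂ)

lemma Q_eq' (ε : ℝ) :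
    ∏ i : Fin n, ∏ j ∈ Finset.Ioi i, (CnkEps n k ε i - CnkEps n k ε j)
      = (ε : ℂ) ^ (∑ s : Fin n, dd n k s) *
          ∏ j : Fin n, ∏ i ∈ Finset.Iio j, uu n k i j (ε : ℂ) := by
  simp only [CnkEps_eq hk hk2 ε]
  exact Q_eq hk hk2 (ε : ℂ)

end GLV


/-- Vanishing of `GL(n,ℂ)` characters at order-two elements: if the number of even entries of
`l` exceeds `n − k`, then `lim_{ε→0⁺} χ_l(C_{n−k,k}(ε)) = 0`. -/
theorem glVanishing (n k : ℕ) (hn : 1 ≤ n) (hk : 0 < k) (hk2 : 2 * k ≤ n)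
    (l : Fin n → ℕ) (hl : StrictAnti l)
    (h : n - k < (Finset.univ.filter fun i => Even (l i)).card) :
    Tendsto (fun ε : ℝ => chiGL l (CnkEps n k ε)) (𝓝[>] 0) (𝓝 0) := by
  classical
  have hdetG : (GLV.Gm n k).det ≠ 0 := GLV.det_Gm_ne_zero hk hk2
  set S : ℕ := ∑ s : Fin n, GLV.dd n k s with hS
  set W : ℝ → ℂ := fun ε => ∏ j : Fin n, ∏ i ∈ Finset.Iio j, GLV.uu n k i j (ε : ℂ) with hWdef
  have hWne : ∀ ε : ℝ, 0 ≤ ε → W ε ≠ 0 := by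
    intro ε hε
    rw [hWdef]
    rw [Finset.prod_ne_zero_iff]
    intro j _
    rw [Finset.prod_ne_zero_iff]
    intro i hi
    exact GLV.uu_ne_zero hk hk2 ε hε (Finset.mem_Iio.mp hi)
  have heq : ∀ ε : ℝ, ε ∈ Set.Ioi (0:ℝ) →
      chiGL l (CnkEps n k ε) = (GLV.Bm n k l (ε : ℂ)).det / ((GLV.Gm n k).det * W ε) := by
    intro ε hε
    have hε' : (0:ℝ) < ε := hε
    have hz : ((ε : ℂ)) ≠ 0 := by
      simp only [ne_eq, Complex.ofReal_eq_zero]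
      exact ne_of_gt hε'
    have hA := GLV.det_AG' hk hk2 l ε
    have hQ := GLV.Q_eq' hk hk2 ε
    have hWne' : W ε ≠ 0 := hWne ε (le_of_lt hε')
    rw [chiGL, hQ]
    rw [div_eq_div_iff (mul_ne_zero (pow_ne_zero _ hz) hWne')
      (mul_ne_zero hdetG hWne')]
    linear_combination W ε * hA
  have hcontB : Continuous fun z : ℂ => (GLV.Bm n k l z).det := by
    apply Continuous.matrix_det
    apply continuous_matrix
    intro i s
    simp only [GLV.Bm, Matrix.of_apply]
    fun_prop
  have hB0 : (GLV.Bm n k l ((0:ℝ) : ℂ)).det = 0 := by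
    rw [Complex.ofReal_zero]
    exact GLV.det_Bm_zero hk hk2 l h
  have hBtend : Tendsto (fun ε : ℝ => (GLV.Bm n k l (ε : ℂ)).det) (𝓝[>] 0) (𝓝 0) := by
    have h1 : Tendsto (fun ε : ℝ => (GLV.Bm n k l (ε : ℂ)).det) (𝓝 0)
        (𝓝 ((GLV.Bm n k l ((0:ℝ) : ℂ)).det)) :=
      (hcontB.comp Complex.continuous_ofReal).tendsto 0
    rw [hB0] at h1
    exact h1.mono_left nhdsWithin_le_nhds
  have hWcont : Continuous W := by
    rw [hWdef]
    apply continuous_finset_prod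
    intro j _
    apply continuous_finset_prod
    intro i _
    unfold GLV.uu
    split_ifs
    · exact continuous_const
    · fun_prop
  have hDtend : Tendsto (fun ε : ℝ => (GLV.Gm n k).det * W ε) (𝓝[>] 0)
      (𝓝 ((GLV.Gm n k).det * W 0)) :=
    ((continuous_const.mul hWcont).tendsto 0).mono_left nhdsWithin_le_nhds
  have hne : (GLV.Gm n k).det * W 0 ≠ 0 := mul_ne_zero hdetG (hWne 0 le_rfl)
  have hfin := hBtend.div hDtend hne
  rw [zero_div] at hfin
  refine hfin.congr' ?_
  exact eventually_mem_nhdsWithin.mono fun ε hε => (heq ε hε).symm
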